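/- Let G = C_{n_1} × ... × C_{n_k} with 1 < n_1 | ... | n_k, k ≥ 2, and n_{k−1} = n_k = n. For any element x of order n in the product AB of the last two factors, the quotient G/(P⟨x⟩) is cyclic of order n, where P is the product of the first k−2 factors. -/

import Mathlib

/-- The abelian group with invariant factors `n 0 ∣ n 1 ∣ ... ∣ n (k-1)`. -/
abbrev IG (k : ℕ) (n : Fin k → ℕ) := ∀ i : Fin k, Multiplicative (ZMod (n i))

/-- The canonical generator of the `i`-th cyclic factor. -/
abbrev gen (k : ℕ) (n : Fin k → ℕ) (i : Fin k) : IG k n :=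
  Pi.mulSingle i (Multiplicative.ofAdd (1 : ZMod (n i)))

open Multiplicative

lemma ofAdd_one_zpow (c : ℕ) (m : ℤ) :
    (Multiplicative.ofAdd (1 : ZMod c)) ^ m = Multiplicative.ofAdd ((m : ZMod c)) := by
  rw [← ofAdd_zsmul]
  norm_num

theorem aux16 (k : ℕ) (n : Fin k → ℕ) (nn : ℕ) (hnn : 0 < nn)
    (i₁ i₂ : Fin k) (hne : i₁ ≠ i₂)
    (heq1 : n i₁ = nn) (heq2 : n i₂ = nn)
    (x : IG k n)
    (hx : x ∈ Subgroup.closure {gen k n i₁, gen k n i₂})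
    (hord : orderOf x = nn) :
    IsCyclic (IG k n ⧸ (Subgroup.closure (gen k n '' {j : Fin k | j ≠ i₁ ∧ j ≠ i₂}) ⊔
        Subgroup.zpowers x)) ∧
    Nat.card (IG k n ⧸ (Subgroup.closure (gen k n '' {j : Fin k | j ≠ i₁ ∧ j ≠ i₂}) ⊔
        Subgroup.zpowers x)) = nn := by
  obtain ⟨s, t, hst⟩ := Subgroup.mem_closure_pair.mp hx
  have hxg : ∀ m : ℤ, x ^ m = gen k n i₁ ^ (s * m) * gen k n i₂ ^ (t * m) := by
    intro m
    rw [← hst, mul_zpow, ← zpow_mul, ← zpow_mul]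
  have hcomp : ∀ p q : ℤ,
      (gen k n i₁ ^ p * gen k n i₂ ^ q) i₁ = Multiplicative.ofAdd ((p : ZMod (n i₁))) ∧
      (gen k n i₁ ^ p * gen k n i₂ ^ q) i₂ = Multiplicative.ofAdd ((q : ZMod (n i₂))) := by
    intro p q
    simp only [gen, ← Pi.mulSingle_zpow, ofAdd_one_zpow, Pi.mul_apply]
    constructor
    · rw [Pi.mulSingle_eq_same, Pi.mulSingle_eq_of_ne hne, mul_one]
    · rw [Pi.mulSingle_eq_same, Pi.mulSingle_eq_of_ne hne.symm, one_mul]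
  -- step A : gcd (gcd s t) nn = 1
  set g : ℕ := Int.gcd (Int.gcd s t) nn with hgdef
  have hgs : (g : ℤ) ∣ s := dvd_trans (Int.gcd_dvd_left _ _) (Int.gcd_dvd_left s t)
  have hgt : (g : ℤ) ∣ t := dvd_trans (Int.gcd_dvd_left _ _) (Int.gcd_dvd_right s t)
  have hgnn : g ∣ nn := by
    have := Int.gcd_dvd_right (a := ((Int.gcd s t : ℕ) : ℤ)) (b := (nn : ℤ))
    exact_mod_cast this
  have hg1 : g = 1 := by
    have hpow : x ^ ((nn / g : ℕ) : ℤ) = 1 := by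
      rw [hxg]
      have e1 : ((s * ((nn / g : ℕ) : ℤ) : ℤ) : ZMod (n i₁)) = 0 := by
        rw [ZMod.intCast_zmod_eq_zero_iff_dvd, heq1]
        obtain ⟨s', hs'⟩ := hgs
        have hnng : (nn : ℤ) = (g : ℤ) * ((nn / g : ℕ) : ℤ) := by
          exact_mod_cast (Nat.mul_div_cancel' hgnn).symm
        exact ⟨s', by rw [hs', hnng]; ring⟩
      have e2 : ((t * ((nn / g : ℕ) : ℤ) : ℤ) : ZMod (n i₂)) = 0 := by
        rw [ZMod.intCast_zmod_eq_zero_iff_dvd, heq2]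
        obtain ⟨t', ht'⟩ := hgt
        have hnng : (nn : ℤ) = (g : ℤ) * ((nn / g : ℕ) : ℤ) := by
          exact_mod_cast (Nat.mul_div_cancel' hgnn).symm
        exact ⟨t', by rw [ht', hnng]; ring⟩
      simp only [gen, ← Pi.mulSingle_zpow, ofAdd_one_zpow, e1, e2, ofAdd_zero,
        Pi.mulSingle_one, mul_one]
    have hdvd1 : nn ∣ nn / g :=
      hord ▸ orderOf_dvd_of_pow_eq_one (n := nn / g) (x := x) (by rw [← zpow_natCast]; exact hpow)
    have hdvd2 : nn / g ∣ nn := Nat.div_dvd_of_dvd hgnn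
    have heqd : nn / g = nn := Nat.dvd_antisymm hdvd2 hdvd1
    have := Nat.mul_div_cancel' hgnn
    rw [heqd] at this
    have : g * nn = 1 * nn := by omega
    exact Nat.eq_of_mul_eq_mul_right hnn this
  -- Bezout
  have hnn0 : ((nn : ℤ) : ZMod (n i₂)) = 0 := by
    rw [← heq2]
    exact_mod_cast ZMod.natCast_self (n i₂)
  obtain ⟨α, β, hαβ⟩ : ∃ α β : ℤ,
      (s : ZMod (n i₂)) * (α : ZMod (n i₂)) + (t : ZMod (n i₂)) * (β : ZMod (n i₂)) = 1 := by
    have h2 := Int.gcd_eq_gcd_ab ((Int.gcd s t : ℕ) : ℤ) (nn : ℤ)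
    have h3 := Int.gcd_eq_gcd_ab s t
    rw [← hgdef, hg1] at h2
    refine ⟨Int.gcdA s t * Int.gcdA ((Int.gcd s t : ℕ) : ℤ) (nn : ℤ),
           Int.gcdB s t * Int.gcdA ((Int.gcd s t : ℕ) : ℤ) (nn : ℤ), ?_⟩
    have key : (1 : ℤ) = s * (Int.gcdA s t * Int.gcdA ((Int.gcd s t : ℕ) : ℤ) (nn : ℤ))
        + t * (Int.gcdB s t * Int.gcdA ((Int.gcd s t : ℕ) : ℤ) (nn : ℤ))
        + nn * Int.gcdB ((Int.gcd s t : ℕ) : ℤ) (nn : ℤ) := by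
      push_cast at h2
      linear_combination h2 + Int.gcdA ((Int.gcd s t : ℕ) : ℤ) (nn : ℤ) * h3
    have := congrArg (fun z : ℤ => (z : ZMod (n i₂))) key
    push_cast at this
    push_cast at hnn0
    rw [hnn0] at this
    push_cast
    linear_combination this.symm
  -- the homomorphism
  have hdv : n i₂ ∣ n i₁ := by rw [heq1, heq2]
  set c : ZMod (n i₁) →+* ZMod (n i₂) := ZMod.castHom hdv (ZMod (n i₂)) with hc
  have hcinj : Function.Injective c := by
    intro a b hab
    obtain ⟨a', rfl⟩ := ZMod.intCast_surjective a
    obtain ⟨b', rfl⟩ := ZMod.intCast_surjective b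
    rw [map_intCast, map_intCast, ZMod.intCast_eq_intCast_iff] at hab
    rw [ZMod.intCast_eq_intCast_iff]
    rwa [heq2, ← heq1] at hab
  set φ : IG k n →* Multiplicative (ZMod (n i₂)) :=
    MonoidHom.mk' (fun y => Multiplicative.ofAdd
      ((t : ZMod (n i₂)) * c (Multiplicative.toAdd (y i₁))
        - (s : ZMod (n i₂)) * Multiplicative.toAdd (y i₂)))
      (by
        intro y z
        simp only [Pi.mul_apply, toAdd_mul, map_add, ← ofAdd_add]
        congr 1
        ring) with hφ
  have φdef : ∀ y : IG k n, φ y = Multiplicative.ofAdd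
      ((t : ZMod (n i₂)) * c (Multiplicative.toAdd (y i₁))
        - (s : ZMod (n i₂)) * Multiplicative.toAdd (y i₂)) := fun _ => rfl
  have hφsurj : Function.Surjective φ := by
    intro z
    obtain ⟨j, hj⟩ := ZMod.intCast_surjective (Multiplicative.toAdd z)
    refine ⟨gen k n i₁ ^ (j * β) * gen k n i₂ ^ (-(j * α)), ?_⟩
    rw [φdef, (hcomp _ _).1, (hcomp _ _).2, toAdd_ofAdd, toAdd_ofAdd, map_intCast]
    conv_rhs => rw [← ofAdd_toAdd z, ← hj]
    congr 1
    push_cast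
    linear_combination (j : ZMod (n i₂)) * hαβ
  set P : Subgroup (IG k n) := Subgroup.closure (gen k n '' {j : Fin k | j ≠ i₁ ∧ j ≠ i₂})
    with hP
  have hker : φ.ker = P ⊔ Subgroup.zpowers x := by
    apply le_antisymm
    · intro y hy
      rw [MonoidHom.mem_ker, φdef] at hy
      have hy' : (t : ZMod (n i₂)) * c (Multiplicative.toAdd (y i₁))
          = (s : ZMod (n i₂)) * Multiplicative.toAdd (y i₂) := by
        have h := congrArg Multiplicative.toAdd hy
        simpa [sub_eq_zero] using h
      obtain ⟨j, hj⟩ := ZMod.intCast_surjective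
        ((α : ZMod (n i₂)) * c (Multiplicative.toAdd (y i₁))
          + (β : ZMod (n i₂)) * Multiplicative.toAdd (y i₂))
      have hji₁ : ((s * j : ℤ) : ZMod (n i₁)) = Multiplicative.toAdd (y i₁) := by
        apply hcinj
        rw [map_intCast]
        push_cast
        linear_combination (s : ZMod (n i₂)) * hj - (β : ZMod (n i₂)) * hy'
          + (c (Multiplicative.toAdd (y i₁))) * hαβ
      have hji₂ : ((t * j : ℤ) : ZMod (n i₂)) = Multiplicative.toAdd (y i₂) := by
        push_cast
        linear_combination (t : ZMod (n i₂)) * hj + (α : ZMod (n i₂)) * hy'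
          + (Multiplicative.toAdd (y i₂)) * hαβ
      have hw1 : (y * (x ^ j)⁻¹) i₁ = 1 := by
        have e := (hcomp (s * j) (t * j)).1
        rw [← hxg j] at e
        rw [Pi.mul_apply, Pi.inv_apply, e, hji₁, ofAdd_toAdd, mul_inv_cancel]
      have hw2 : (y * (x ^ j)⁻¹) i₂ = 1 := by
        have e := (hcomp (s * j) (t * j)).2
        rw [← hxg j] at e
        rw [Pi.mul_apply, Pi.inv_apply, e, hji₂, ofAdd_toAdd, mul_inv_cancel]
      have hwP : (y * (x ^ j)⁻¹) ∈ P := by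
        rw [← Finset.univ_prod_mulSingle (y * (x ^ j)⁻¹)]
        apply Subgroup.prod_mem
        intro i _
        by_cases h1 : i = i₁
        · subst h1
          rw [hw1, Pi.mulSingle_one]
          exact one_mem P
        by_cases h2 : i = i₂
        · subst h2
          rw [hw2, Pi.mulSingle_one]
          exact one_mem P
        · obtain ⟨m, hm⟩ := ZMod.intCast_surjective (Multiplicative.toAdd ((y * (x ^ j)⁻¹) i))
          have hgen : Pi.mulSingle i ((y * (x ^ j)⁻¹) i) = gen k n i ^ m := by
            rw [gen, ← Pi.mulSingle_zpow, ofAdd_one_zpow, hm, ofAdd_toAdd]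
          rw [hgen]
          exact Subgroup.zpow_mem _
            (Subgroup.subset_closure
              (Set.mem_image_of_mem _ (show i ∈ {j : Fin k | j ≠ i₁ ∧ j ≠ i₂} from ⟨h1, h2⟩))) m
      have hyeq : y = (y * (x ^ j)⁻¹) * x ^ j := by group
      rw [hyeq]
      exact Subgroup.mul_mem_sup hwP (Subgroup.zpow_mem _ (Subgroup.mem_zpowers x) j)
    · rw [sup_le_iff]
      constructor
      · rw [hP, Subgroup.closure_le]
        rintro _ ⟨i, ⟨h1, h2⟩, rfl⟩
        rw [SetLike.mem_coe, MonoidHom.mem_ker, φdef]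
        have e1 : (gen k n i) i₁ = 1 := Pi.mulSingle_eq_of_ne (Ne.symm h1) _
        have e2 : (gen k n i) i₂ = 1 := Pi.mulSingle_eq_of_ne (Ne.symm h2) _
        rw [e1, e2]
        simp
      · rw [Subgroup.zpowers_le, MonoidHom.mem_ker, φdef]
        have e1 := (hcomp s t).1
        have e2 := (hcomp s t).2
        rw [hst] at e1 e2
        rw [e1, e2, toAdd_ofAdd, toAdd_ofAdd, map_intCast]
        have : ((t : ZMod (n i₂)) * (s : ZMod (n i₂))
            - (s : ZMod (n i₂)) * (t : ZMod (n i₂))) = 0 := by ring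
        rw [this, ofAdd_zero]
  have e := (QuotientGroup.quotientMulEquivOfEq hker).symm.trans
    (QuotientGroup.quotientKerEquivOfSurjective φ hφsurj)
  constructor
  · exact isCyclic_of_surjective e.symm e.symm.surjective
  · rw [Nat.card_congr e.toEquiv, Nat.card_congr Multiplicative.toAdd, Nat.card_zmod, heq2]

theorem stmt_16 (k : ℕ) (hk : 2 ≤ k) (n : Fin k → ℕ) (nn : ℕ)
    (h1 : ∀ i, 1 < n i) (hdvd : ∀ i j : Fin k, i ≤ j → n i ∣ n j)
    (heq1 : n ⟨k - 2, by omega⟩ = nn) (heq2 : n ⟨k - 1, by omega⟩ = nn)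
    (x : IG k n)
    (hx : x ∈ Subgroup.closure {gen k n ⟨k - 2, by omega⟩, gen k n ⟨k - 1, by omega⟩})
    (hord : orderOf x = nn) :
    IsCyclic (IG k n ⧸ (Subgroup.closure (gen k n '' {j : Fin k | (j : ℕ) < k - 2}) ⊔
        Subgroup.zpowers x)) ∧
    Nat.card (IG k n ⧸ (Subgroup.closure (gen k n '' {j : Fin k | (j : ℕ) < k - 2}) ⊔
        Subgroup.zpowers x)) = nn := by
  have hset : {j : Fin k | (j : ℕ) < k - 2}
      = {j : Fin k | j ≠ (⟨k - 2, by omega⟩ : Fin k) ∧ j ≠ (⟨k - 1, by omega⟩ : Fin k)} := by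
    ext j
    have := j.isLt
    simp only [Set.mem_setOf_eq, ne_eq, Fin.ext_iff]
    omega
  rw [hset]
  exact aux16 k n nn (by have := h1 ⟨k - 2, by omega⟩; omega) _ _
    (by simp only [ne_eq, Fin.mk.injEq]; omega) heq1 heq2 x hx hord
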